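/- Feasibility check via matchings (Theorem 3, reverse direction): if the maximum matching m* in H_b(S) has size at least n−K, with |S| = k < K, then setting P' ⊆ V'\S' to be the vertices of V'\S' missed by m* (so |P'| ≤ K−k), the set Q = P ∪ S satisfies |Q| ≤ K and m* covers V'\Q' in H_b(Q), i.e., m* is a perfect matching in H_b(Q). -/
import Mathlib


/-- A matching of the bipartite graph with edge set `E`. -/
def IsBipMatching {V1 V2 : Type*} (E : Set (V1 × V2)) (M : Finset (V1 × V2)) : Prop :=
  (↑M : Set (V1 × V2)) ⊆ E ∧
    ∀ e ∈ M, ∀ f ∈ M, e ≠ f → e.1 ≠ f.1 ∧ e.2 ≠ f.2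

/-- The auxiliary bipartite graph `H_b(T)`. -/
def Hb {n : ℕ} (E : Set (Fin n × Fin n)) (T : Finset (Fin n)) : Set (Fin n × Fin n) :=
  {e ∈ E | e.2 ∉ T}

/-- Theorem 3, reverse direction: if a maximum matching `m*` of `H_b(S)` has size
at least `n − K`, then letting `P` be the vertices of `V' \ S'` missed by `m*`,
the set `Q = P ∪ S` has `|P| ≤ K − k`, `|Q| ≤ K`, and `m*` is a perfect matching
of `H_b(Q)` (a matching covering `V' \ Q'`). -/
theorem feasibility_check_reverse {n : ℕ} (E : Set (Fin n × Fin n))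
    (K k : ℕ) (S : Finset (Fin n)) (hScard : S.card = k) (hkK : k < K)
    (Mstar : Finset (Fin n × Fin n)) (hMstar : IsBipMatching (Hb E S) Mstar)
    (hmax : ∀ M : Finset (Fin n × Fin n), IsBipMatching (Hb E S) M → M.card ≤ Mstar.card)
    (hsize : n - K ≤ Mstar.card) :
    let P : Finset (Fin n) :=
      Finset.univ.filter (fun j => j ∉ S ∧ ∀ e ∈ Mstar, e.2 ≠ j)
    let Q : Finset (Fin n) := P ∪ S
    P.card ≤ K - k ∧ Q.card ≤ K ∧ IsBipMatching (Hb E Q) Mstar ∧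
      ∀ j : Fin n, j ∉ Q → ∃ e ∈ Mstar, e.2 = j := by
  intro P Q
  obtain ⟨hsub, hdisj⟩ := hMstar
  have hnotS : ∀ e ∈ Mstar, e.2 ∉ S := fun e he => (hsub he).2
  have hPQ : ∀ j : Fin n, j ∉ Q → ∃ e ∈ Mstar, e.2 = j := by
    intro j hj
    simp only [Q, P, Finset.mem_union, Finset.mem_filter, Finset.mem_univ, true_and] at hj
    push_neg at hj
    obtain ⟨h1, h2⟩ := hj
    obtain ⟨e, he, he2⟩ := h1 h2
    exact ⟨e, he, he2⟩
  -- covered set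
  set C : Finset (Fin n) := Mstar.image Prod.snd with hC
  have hCcard : C.card = Mstar.card := by
    apply Finset.card_image_of_injOn
    intro e he f hf hef
    by_contra h
    exact (hdisj e he f hf h).2 hef
  have hCle : Mstar.card ≤ n := by
    rw [← hCcard]
    simpa using Finset.card_le_card (Finset.subset_univ C)
  have huniv : S ∪ P ∪ C = Finset.univ := by
    ext j
    simp only [Finset.mem_union, Finset.mem_univ, iff_true, P, hC, Finset.mem_filter,
      Finset.mem_image]
    by_cases hS : j ∈ S
    · exact Or.inl (Or.inl hS)
    by_cases hcov : ∃ e ∈ Mstar, e.2 = j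
    · exact Or.inr hcov
    · push_neg at hcov
      exact Or.inl (Or.inr ⟨trivial, hS, hcov⟩)
  have hd1 : Disjoint S P := by
    rw [Finset.disjoint_left]
    intro a ha ha'
    simp only [P, Finset.mem_filter] at ha'
    exact ha'.2.1 ha
  have hd2 : Disjoint (S ∪ P) C := by
    rw [Finset.disjoint_right]
    intro a ha
    simp only [hC, Finset.mem_image] at ha
    obtain ⟨e, he, rfl⟩ := ha
    simp only [Finset.mem_union, P, Finset.mem_filter, not_or]
    exact ⟨hnotS e he, fun h => h.2.2 e he rfl⟩
  have hsum : S.card + P.card + C.card = n := by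
    rw [← Finset.card_union_of_disjoint hd1, ← Finset.card_union_of_disjoint hd2, huniv]
    simp
  have hP : P.card ≤ K - k := by omega
  refine ⟨hP, ?_, ⟨?_, hdisj⟩, hPQ⟩
  · calc Q.card ≤ P.card + S.card := Finset.card_union_le _ _
      _ ≤ K := by omega
  · intro e he
    refine ⟨(hsub he).1, ?_⟩
    simp only [Q, Finset.mem_union, P, Finset.mem_filter, not_or]
    exact ⟨fun h => h.2.2 e he rfl, hnotS e he⟩
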